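/- Dual formula for the mass-N normalized Sinkhorn cost (saturated case of Corollary 1): let N > 0 and let (a,b) be a pair of positive vectors with ∑_i a_i = ∑_j b_j = N. Then min_{P ∈ P(a,b)} ⟨P, C⟩ + (1/λ)⟨P, log(P/N)⟩ equals the supremum over all (u,v) ∈ ℝ^{Ma}×ℝ^{Mb} of ⟨a,u⟩ + ⟨b,v⟩ − (N/λ) log ( ∑_{i,j} e^{−λ(C_{ij} − u_i − v_j)} ). -/

import Mathlib

open scoped BigOperators

/-- The transport polytope `P(a,b)`: nonnegative matrices with row sums `a`
and column sums `b`. -/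
def transportPolytope {Ma Mb : ℕ} (a : Fin Ma → ℝ) (b : Fin Mb → ℝ) :
    Set (Matrix (Fin Ma) (Fin Mb) ℝ) :=
  {P | (∀ i j, 0 ≤ P i j) ∧ (∀ i, ∑ j, P i j = a i) ∧ (∀ j, ∑ i, P i j = b j)}

/-- The mass-`N` normalized entropic transport cost
`⟨P,C⟩ + (1/λ)⟨P, log(P/N)⟩`.
(Note `Real.log 0 = 0` in Mathlib, so the convention `0 · log 0 = 0` holds.) -/
noncomputable def entTransportCostN {Ma Mb : ℕ} (C : Matrix (Fin Ma) (Fin Mb) ℝ)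
    (lam N : ℝ) (P : Matrix (Fin Ma) (Fin Mb) ℝ) : ℝ :=
  (∑ i, ∑ j, P i j * C i j) + (1 / lam) * ∑ i, ∑ j, P i j * Real.log (P i j / N)

open Finset Matrix

lemma gibbs_ineq {ι : Type*} [Fintype ι] (p q : ι → ℝ) (hp : ∀ i, 0 ≤ p i)
    (hq : ∀ i, 0 < q i) (hps : 0 < ∑ i, p i) :
    (∑ i, p i) * Real.log ((∑ i, p i) / (∑ i, q i)) ≤ ∑ i, p i * Real.log (p i / q i) := by
  have hqs : 0 < ∑ i, q i := by
    have : Nonempty ι := by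
      by_contra h
      simp [not_nonempty_iff.mp h, Finset.univ_eq_empty] at hps
    exact Finset.sum_pos (fun i _ => hq i) univ_nonempty
  set r : ℝ := (∑ i, p i) / (∑ i, q i) with hr
  have hrpos : 0 < r := div_pos hps hqs
  have key : ∀ i, p i * Real.log r ≤ p i * Real.log (p i / q i) + (q i * r - p i) := by
    intro i
    rcases eq_or_lt_of_le (hp i) with h0 | h0
    · rw [← h0]; simp [le_of_lt (mul_pos (hq i) hrpos)]
    · have h1 : Real.log (r * (q i / p i)) ≤ r * (q i / p i) - 1 :=
        Real.log_le_sub_one_of_pos (mul_pos hrpos (div_pos (hq i) h0))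
      rw [Real.log_mul (ne_of_gt hrpos) (ne_of_gt (div_pos (hq i) h0)),
        Real.log_div (ne_of_gt (hq i)) (ne_of_gt h0)] at h1
      have h2 : Real.log r ≤ Real.log (p i / q i) + (r * (q i / p i) - 1) := by
        rw [Real.log_div (ne_of_gt h0) (ne_of_gt (hq i))]; linarith
      calc p i * Real.log r ≤ p i * (Real.log (p i / q i) + (r * (q i / p i) - 1)) := by
            exact mul_le_mul_of_nonneg_left h2 (le_of_lt h0)
        _ = p i * Real.log (p i / q i) + (q i * r - p i) := by
            field_simp
  calc (∑ i, p i) * Real.log r = ∑ i, p i * Real.log r := by rw [Finset.sum_mul]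
    _ ≤ ∑ i, (p i * Real.log (p i / q i) + (q i * r - p i)) :=
        Finset.sum_le_sum (fun i _ => key i)
    _ = ∑ i, p i * Real.log (p i / q i) + ((∑ i, q i) * r - ∑ i, p i) := by
        rw [Finset.sum_add_distrib, Finset.sum_sub_distrib, ← Finset.sum_mul]
    _ = ∑ i, p i * Real.log (p i / q i) := by
        rw [hr]; field_simp; ring


noncomputable def Zfun {Ma Mb : ℕ} (C : Matrix (Fin Ma) (Fin Mb) ℝ) (lam : ℝ)
    (u : Fin Ma → ℝ) (v : Fin Mb → ℝ) : ℝ :=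
  ∑ i, ∑ j, Real.exp (-(lam * (C i j - u i - v j)))


noncomputable def Dfun {Ma Mb : ℕ} (C : Matrix (Fin Ma) (Fin Mb) ℝ) (lam N : ℝ)
    (a : Fin Ma → ℝ) (b : Fin Mb → ℝ) (u : Fin Ma → ℝ) (v : Fin Mb → ℝ) : ℝ :=
  ∑ i, a i * u i + ∑ j, b j * v j - (N / lam) * Real.log (Zfun C lam u v)


lemma Zfun_pos {Ma Mb : ℕ} (hMa : 0 < Ma) (hMb : 0 < Mb)
    (C : Matrix (Fin Ma) (Fin Mb) ℝ) (lam : ℝ) (u : Fin Ma → ℝ) (v : Fin Mb → ℝ) :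
    0 < Zfun C lam u v := by
  have : Nonempty (Fin Ma) := Fin.pos_iff_nonempty.mp hMa
  have : Nonempty (Fin Mb) := Fin.pos_iff_nonempty.mp hMb
  exact Finset.sum_pos (fun i _ => Finset.sum_pos (fun j _ => Real.exp_pos _) univ_nonempty)
    univ_nonempty


lemma Zfun_symm {Ma Mb : ℕ} (C : Matrix (Fin Ma) (Fin Mb) ℝ) (lam : ℝ)
    (u : Fin Ma → ℝ) (v : Fin Mb → ℝ) :
    Zfun C lam u v = Zfun Cᵀ lam v u := by
  rw [Zfun, Zfun, Finset.sum_comm]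
  apply Finset.sum_congr rfl; intro j _; apply Finset.sum_congr rfl; intro i _
  ring_nf
  rw [Matrix.transpose_apply]
  ring_nf


lemma Dfun_symm {Ma Mb : ℕ} (C : Matrix (Fin Ma) (Fin Mb) ℝ) (lam N : ℝ)
    (a : Fin Ma → ℝ) (b : Fin Mb → ℝ) (u : Fin Ma → ℝ) (v : Fin Mb → ℝ) :
    Dfun C lam N a b u v = Dfun Cᵀ lam N b a v u := by
  rw [Dfun, Dfun, Zfun_symm]; ring


lemma Dfun_continuous {Ma Mb : ℕ} (hMa : 0 < Ma) (hMb : 0 < Mb)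
    (C : Matrix (Fin Ma) (Fin Mb) ℝ) (lam N : ℝ) (a : Fin Ma → ℝ) (b : Fin Mb → ℝ) :
    Continuous (fun p : (Fin Ma → ℝ) × (Fin Mb → ℝ) => Dfun C lam N a b p.1 p.2) := by
  have hZ : Continuous (fun p : (Fin Ma → ℝ) × (Fin Mb → ℝ) => Zfun C lam p.1 p.2) := by
    unfold Zfun
    apply continuous_finset_sum; intro i _
    apply continuous_finset_sum; intro j _
    fun_prop
  unfold Dfun
  have h1 : Continuous (fun p : (Fin Ma → ℝ) × (Fin Mb → ℝ) =>
      Real.log (Zfun C lam p.1 p.2)) :=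
    hZ.log (fun p => (Zfun_pos hMa hMb C lam p.1 p.2).ne')
  fun_prop


lemma Dfun_shift_u {Ma Mb : ℕ} (C : Matrix (Fin Ma) (Fin Mb) ℝ) (lam N : ℝ)
    (hMa : 0 < Ma) (hMb : 0 < Mb) (hlam : 0 < lam)
    (a : Fin Ma → ℝ) (b : Fin Mb → ℝ) (haN : ∑ i, a i = N)
    (u : Fin Ma → ℝ) (v : Fin Mb → ℝ) (t : ℝ) :
    Dfun C lam N a b (fun i => u i + t) v = Dfun C lam N a b u v := by
  have hZ : Zfun C lam (fun i => u i + t) v = Real.exp (lam * t) * Zfun C lam u v := by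
    unfold Zfun
    rw [Finset.mul_sum]
    apply Finset.sum_congr rfl; intro i _
    rw [Finset.mul_sum]
    apply Finset.sum_congr rfl; intro j _
    rw [← Real.exp_add]
    congr 1; ring
  have ha' : ∑ i, a i * (u i + t) = (∑ i, a i * u i) + N * t := by
    rw [← haN, Finset.sum_mul]
    rw [← Finset.sum_add_distrib]
    apply Finset.sum_congr rfl; intro i _; ring
  unfold Dfun
  rw [hZ, ha', Real.log_mul (Real.exp_ne_zero _) (Zfun_pos hMa hMb C lam u v).ne',
    Real.log_exp]
  field_simp
  ring


lemma weak_duality {Ma Mb : ℕ} (hMa : 0 < Ma) (hMb : 0 < Mb)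
    (C : Matrix (Fin Ma) (Fin Mb) ℝ) (lam N : ℝ) (hlam : 0 < lam) (hN : 0 < N)
    (a : Fin Ma → ℝ) (b : Fin Mb → ℝ) (haN : ∑ i, a i = N)
    (P : Matrix (Fin Ma) (Fin Mb) ℝ) (hP : P ∈ transportPolytope a b)
    (u : Fin Ma → ℝ) (v : Fin Mb → ℝ) :
    Dfun C lam N a b u v ≤ entTransportCostN C lam N P := by
  obtain ⟨hPnn, hProw, hPcol⟩ := hP
  set Z := Zfun C lam u v with hZdef
  have hZ : 0 < Z := Zfun_pos hMa hMb C lam u v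
  have hPsum : ∑ i, ∑ j, P i j = N := by
    rw [Finset.sum_congr rfl (fun i _ => hProw i), haN]
  have key := gibbs_ineq (ι := Fin Ma × Fin Mb)
    (fun ij => P ij.1 ij.2)
    (fun ij => N * Real.exp (-(lam * (C ij.1 ij.2 - u ij.1 - v ij.2))))
    (fun ij => hPnn ij.1 ij.2)
    (fun ij => mul_pos hN (Real.exp_pos _))
    (by rw [Fintype.sum_prod_type]; rw [hPsum]; exact hN)
  rw [Fintype.sum_prod_type, Fintype.sum_prod_type, Fintype.sum_prod_type] at key
  simp only [hPsum] at key
  have hq : ∑ i, ∑ j, N * Real.exp (-(lam * (C i j - u i - v j))) = N * Z := by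
    rw [hZdef, Zfun, Finset.mul_sum]
    exact Finset.sum_congr rfl (fun i _ => by rw [Finset.mul_sum])
  rw [hq] at key
  have hlog : Real.log (N / (N * Z)) = -Real.log Z := by
    have : N / (N * Z) = Z⁻¹ := by field_simp
    rw [this, Real.log_inv]
  rw [hlog] at key
  -- pointwise rewriting of the RHS
  have hterm : ∀ i j, P i j * Real.log (P i j / (N * Real.exp (-(lam * (C i j - u i - v j)))))
      = P i j * Real.log (P i j / N) + lam * (P i j * C i j - P i j * u i - P i j * v j) := by
    intro i j
    rcases eq_or_lt_of_le (hPnn i j) with h0 | h0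
    · rw [← h0]; simp
    · rw [Real.log_div h0.ne' (mul_pos hN (Real.exp_pos _)).ne',
        Real.log_mul hN.ne' (Real.exp_ne_zero _), Real.log_exp,
        Real.log_div h0.ne' hN.ne']
      ring
  have hRHS : ∑ i, ∑ j, P i j * Real.log (P i j / (N * Real.exp (-(lam * (C i j - u i - v j)))))
      = (∑ i, ∑ j, P i j * Real.log (P i j / N))
        + lam * ((∑ i, ∑ j, P i j * C i j) - (∑ i, a i * u i) - (∑ j, b j * v j)) := by
    have hU : ∑ i, ∑ j, P i j * u i = ∑ i, a i * u i := by
      apply Finset.sum_congr rfl; intro i _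
      rw [← Finset.sum_mul, hProw i, mul_comm]
    have hV : ∑ i, ∑ j, P i j * v j = ∑ j, b j * v j := by
      rw [Finset.sum_comm]
      apply Finset.sum_congr rfl; intro j _
      rw [← Finset.sum_mul, hPcol j, mul_comm]
    rw [Finset.sum_congr rfl (fun i _ => Finset.sum_congr rfl (fun j _ => hterm i j))]
    rw [← hU, ← hV]
    simp only [Finset.sum_add_distrib, mul_sub, Finset.mul_sum, Finset.sum_sub_distrib]
  rw [hRHS] at key
  -- now conclude by algebra
  set A := ∑ i, a i * u i
  set B := ∑ j, b j * v j
  set SC := ∑ i, ∑ j, P i j * C i j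
  set SL := ∑ i, ∑ j, P i j * Real.log (P i j / N)
  rw [Dfun, entTransportCostN]
  rw [← hZdef]
  rw [show (A + B - N / lam * Real.log Z ≤ SC + 1 / lam * SL)
      ↔ (lam * (A + B - N / lam * Real.log Z) ≤ lam * (SC + 1 / lam * SL)) from
    (mul_le_mul_iff_right₀ hlam).symm]
  have e1 : lam * (A + B - N / lam * Real.log Z) = lam * A + lam * B - N * Real.log Z := by
    field_simp
  have e2 : lam * (SC + 1 / lam * SL) = lam * SC + SL := by field_simp
  rw [e1, e2]
  nlinarith [key]


lemma D_upper {Ma Mb : ℕ} (hMa : 0 < Ma) (hMb : 0 < Mb)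
    (C : Matrix (Fin Ma) (Fin Mb) ℝ) (lam N : ℝ) (hlam : 0 < lam) (hN : 0 < N)
    (a : Fin Ma → ℝ) (b : Fin Mb → ℝ)
    (ha : ∀ i, 0 < a i) (hb : ∀ j, 0 < b j)
    (haN : ∑ i, a i = N) (hbN : ∑ j, b j = N) (i0 i1 : Fin Ma) :
    ∃ K : ℝ, ∀ u v, Dfun C lam N a b u v ≤ K - (a i1 / 2) * (u i0 - u i1) := by
  set ε := a i1 / 2 with hεdef
  have hε : 0 < ε := half_pos (ha i1)
  set a' : Fin Ma → ℝ :=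
    fun k => a k + (if k = i0 then ε else 0) - (if k = i1 then ε else 0) with ha'def
  have ha' : ∀ k, 0 < a' k := by
    intro k
    simp only [ha'def]
    split_ifs with h0 h1 h1
    · linarith [ha k]
    · linarith [ha k, hε]
    · subst h1; rw [hεdef]; linarith [ha k]
    · linarith [ha k]
  have ha'N : ∑ k, a' k = N := by
    simp only [ha'def, Finset.sum_sub_distrib, Finset.sum_add_distrib,
      Finset.sum_ite_eq' Finset.univ, Finset.mem_univ, if_true, haN]
    ring
  refine ⟨(∑ i, ∑ j, (a' i * b j / N) * C i j)
      + (1/lam) * (∑ i, ∑ j, (a' i * b j / N) * Real.log (a' i * b j / N))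
      - (N/lam) * Real.log N, fun u v => ?_⟩
  set Z := Zfun C lam u v with hZdef
  have hZ : 0 < Z := Zfun_pos hMa hMb C lam u v
  have hppos : ∀ (ij : Fin Ma × Fin Mb), 0 < a' ij.1 * b ij.2 / N :=
    fun ij => div_pos (mul_pos (ha' ij.1) (hb ij.2)) hN
  have key := gibbs_ineq (ι := Fin Ma × Fin Mb)
    (fun ij => a' ij.1 * b ij.2 / N)
    (fun ij => Real.exp (-(lam * (C ij.1 ij.2 - u ij.1 - v ij.2))))
    (fun ij => (hppos ij).le)
    (fun ij => Real.exp_pos _)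
    (by
      rw [Fintype.sum_prod_type]
      have : ∑ i, ∑ j, a' i * b j / N = N := by
        rw [show ∀ (f : Fin Ma → ℝ), (∑ i, f i) = ∑ i, f i from fun _ => rfl]
        calc ∑ i, ∑ j, a' i * b j / N = ∑ i, a' i * (∑ j, b j) / N := by
              apply Finset.sum_congr rfl; intro i _
              rw [Finset.mul_sum, Finset.sum_div]
          _ = N := by
              rw [hbN]
              rw [← Finset.sum_div, ← Finset.sum_mul, ha'N]
              field_simp
      rw [this]; exact hN)
  have hpsum : ∑ ij : Fin Ma × Fin Mb, a' ij.1 * b ij.2 / N = N := by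
    rw [Fintype.sum_prod_type]
    calc ∑ i, ∑ j, a' i * b j / N = ∑ i, a' i * (∑ j, b j) / N := by
          apply Finset.sum_congr rfl; intro i _
          rw [Finset.mul_sum, Finset.sum_div]
      _ = N := by
          rw [hbN, ← Finset.sum_div, ← Finset.sum_mul, ha'N]; field_simp
  have hqsum : ∑ ij : Fin Ma × Fin Mb, Real.exp (-(lam * (C ij.1 ij.2 - u ij.1 - v ij.2))) = Z := by
    rw [Fintype.sum_prod_type, hZdef, Zfun]
  rw [hpsum, hqsum] at key
  -- rewrite RHS of key
  have hterm : ∀ (ij : Fin Ma × Fin Mb),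
      (a' ij.1 * b ij.2 / N) * Real.log ((a' ij.1 * b ij.2 / N) / Real.exp (-(lam * (C ij.1 ij.2 - u ij.1 - v ij.2))))
      = (a' ij.1 * b ij.2 / N) * Real.log (a' ij.1 * b ij.2 / N)
        + lam * ((a' ij.1 * b ij.2 / N) * C ij.1 ij.2 - (a' ij.1 * b ij.2 / N) * u ij.1
          - (a' ij.1 * b ij.2 / N) * v ij.2) := by
    intro ij
    rw [Real.log_div (hppos ij).ne' (Real.exp_ne_zero _), Real.log_exp]
    ring
  rw [Finset.sum_congr rfl (fun ij _ => hterm ij)] at key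
  rw [Finset.sum_add_distrib] at key
  have hsplit : ∑ ij : Fin Ma × Fin Mb,
      lam * ((a' ij.1 * b ij.2 / N) * C ij.1 ij.2 - (a' ij.1 * b ij.2 / N) * u ij.1
        - (a' ij.1 * b ij.2 / N) * v ij.2)
      = lam * ((∑ i, ∑ j, (a' i * b j / N) * C i j) - (∑ i, a' i * u i) - (∑ j, b j * v j)) := by
    rw [← Finset.mul_sum]
    congr 1
    rw [Finset.sum_sub_distrib, Finset.sum_sub_distrib]
    congr 1
    · congr 1
      · rw [Fintype.sum_prod_type]
      · rw [Fintype.sum_prod_type]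
        apply Finset.sum_congr rfl; intro i _
        dsimp only
        rw [← Finset.sum_mul, show (∑ j, a' i * b j / N) = a' i from by
          rw [← Finset.sum_div, ← Finset.mul_sum, hbN]; field_simp]
    · rw [Fintype.sum_prod_type, Finset.sum_comm]
      apply Finset.sum_congr rfl; intro j _
      dsimp only
      rw [← Finset.sum_mul, show (∑ i, a' i * b j / N) = b j from by
        rw [← Finset.sum_div, ← Finset.sum_mul, ha'N]; field_simp, mul_comm]
  rw [hsplit] at key
  have hpl : ∑ ij : Fin Ma × Fin Mb, (a' ij.1 * b ij.2 / N) * Real.log (a' ij.1 * b ij.2 / N)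
      = ∑ i, ∑ j, (a' i * b j / N) * Real.log (a' i * b j / N) := by
    rw [Fintype.sum_prod_type]
  rw [hpl] at key
  rw [Real.log_div hN.ne' hZ.ne'] at key
  -- final algebra
  set A := ∑ i, a i * u i with hA
  set A' := ∑ i, a' i * u i with hA'
  set B := ∑ j, b j * v j
  set SPC := ∑ i, ∑ j, (a' i * b j / N) * C i j
  set SLP := ∑ i, ∑ j, (a' i * b j / N) * Real.log (a' i * b j / N)
  have hAdiff : A' = A + ε * (u i0 - u i1) := by
    rw [hA, hA', ha'def]
    simp only [add_mul, sub_mul, ite_mul, zero_mul,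
      Finset.sum_add_distrib, Finset.sum_sub_distrib,
      Finset.sum_ite_eq' Finset.univ, Finset.mem_univ, if_true]
    ring
  rw [Dfun, ← hZdef]
  rw [show ((A + B - N / lam * Real.log Z ≤ SPC + 1/lam * SLP - N/lam * Real.log N - ε * (u i0 - u i1))
      ↔ (lam * (A + B - N / lam * Real.log Z) ≤ lam * (SPC + 1/lam * SLP - N/lam * Real.log N - ε * (u i0 - u i1)))) from
    (mul_le_mul_iff_right₀ hlam).symm]
  have e1 : lam * (A + B - N / lam * Real.log Z) = lam * A + lam * B - N * Real.log Z := by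
    field_simp
  have e2 : lam * (SPC + 1/lam * SLP - N/lam * Real.log N - ε * (u i0 - u i1))
      = lam * SPC + SLP - N * Real.log N - lam * (ε * (u i0 - u i1)) := by
    field_simp
  rw [e1, e2]
  have h4 : lam * A' = lam * A + lam * (ε * (u i0 - u i1)) := by rw [hAdiff]; ring
  nlinarith [key, h4]


lemma hasDerivAt_row {Ma Mb : ℕ} (hMa : 0 < Ma) (hMb : 0 < Mb)
    (C : Matrix (Fin Ma) (Fin Mb) ℝ) (lam N : ℝ) (hlam : 0 < lam)
    (a : Fin Ma → ℝ) (b : Fin Mb → ℝ)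
    (u : Fin Ma → ℝ) (v : Fin Mb → ℝ) (i : Fin Ma) :
    HasDerivAt (fun t => Dfun C lam N a b (fun k => u k + if k = i then t else 0) v)
      (a i - N * (∑ j, Real.exp (-(lam * (C i j - u i - v j)))) / Zfun C lam u v) 0 := by
  set e : Fin Ma → Fin Mb → ℝ := fun k j => -(lam * (C k j - u k - v j)) with hedef
  set c : Fin Ma → ℝ := fun k => if k = i then lam else 0 with hcdef
  have hZ : 0 < Zfun C lam u v := Zfun_pos hMa hMb C lam u v
  have hfun : (fun t => Dfun C lam N a b (fun k => u k + if k = i then t else 0) v)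
      = fun t => ((∑ k, a k * u k) + a i * t + (∑ j, b j * v j))
        - (N / lam) * Real.log (∑ k, ∑ j, Real.exp (c k * t + e k j)) := by
    funext t
    rw [Dfun, Zfun]
    have h1 : ∑ k, a k * (u k + if k = i then t else 0) = (∑ k, a k * u k) + a i * t := by
      simp only [mul_add, Finset.sum_add_distrib, mul_ite, mul_zero,
        Finset.sum_ite_eq' Finset.univ, Finset.mem_univ, if_true]
    have h2 : ∀ k (j : Fin Mb),
        -(lam * (C k j - (u k + if k = i then t else 0) - v j)) = c k * t + e k j := by
      intro k j
      by_cases hk : k = i <;> simp [hcdef, hedef, hk] <;> ring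
    rw [h1]
    congr 2
    congr 1
    apply Finset.sum_congr rfl; intro k _
    apply Finset.sum_congr rfl; intro j _
    rw [h2]
  rw [hfun]
  -- derivative of Z(t)
  have hZt : HasDerivAt (fun t => ∑ k, ∑ j, Real.exp (c k * t + e k j))
      (∑ k, ∑ j, Real.exp (c k * 0 + e k j) * (c k * 1)) 0 := by
    apply HasDerivAt.fun_sum; intro k _
    apply HasDerivAt.fun_sum; intro j _
    exact (((hasDerivAt_id (0:ℝ)).const_mul (c k)).add_const (e k j)).exp
  have hZ0 : ∑ k, ∑ j, Real.exp (c k * 0 + e k j) = Zfun C lam u v := by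
    rw [Zfun]
    apply Finset.sum_congr rfl; intro k _
    apply Finset.sum_congr rfl; intro j _
    rw [mul_zero, zero_add, hedef]
  have hDz : (∑ k, ∑ j, Real.exp (c k * 0 + e k j) * (c k * 1))
      = lam * ∑ j, Real.exp (-(lam * (C i j - u i - v j))) := by
    simp only [mul_zero, zero_add, mul_one]
    have : ∀ k, ∑ j, Real.exp (e k j) * c k = (∑ j, Real.exp (e k j)) * c k := by
      intro k; rw [Finset.sum_mul]
    rw [Finset.sum_congr rfl (fun k _ => this k)]
    simp only [hcdef, mul_ite, mul_zero, Finset.sum_ite_eq' Finset.univ,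
      Finset.mem_univ, if_true]
    rw [mul_comm, hedef]
  have hlog : HasDerivAt (fun t => Real.log (∑ k, ∑ j, Real.exp (c k * t + e k j)))
      ((lam * ∑ j, Real.exp (-(lam * (C i j - u i - v j)))) / Zfun C lam u v) 0 := by
    have := hZt.log (by rw [hZ0]; exact hZ.ne')
    rw [hZ0, hDz] at this
    exact this
  have hlin : HasDerivAt (fun t => (∑ k, a k * u k) + a i * t + (∑ j, b j * v j)) (a i) 0 := by
    have h := ((hasDerivAt_id (0:ℝ)).const_mul (a i)).const_add (∑ k, a k * u k)
    have h2 := h.add_const (∑ j, b j * v j)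
    simpa using h2
  have hfull := hlin.sub (hlog.const_mul (N / lam))
  refine hfull.congr_deriv ?_
  field_simp


lemma cost_eq_dual {Ma Mb : ℕ} (hMa : 0 < Ma) (hMb : 0 < Mb)
    (C : Matrix (Fin Ma) (Fin Mb) ℝ) (lam N : ℝ) (hlam : 0 < lam) (hN : 0 < N)
    (a : Fin Ma → ℝ) (b : Fin Mb → ℝ) (haN : ∑ i, a i = N)
    (u : Fin Ma → ℝ) (v : Fin Mb → ℝ)
    (P : Matrix (Fin Ma) (Fin Mb) ℝ)
    (hPdef : ∀ i j, P i j = N * Real.exp (-(lam * (C i j - u i - v j))) / Zfun C lam u v)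
    (hrow : ∀ i, ∑ j, P i j = a i) (hcol : ∀ j, ∑ i, P i j = b j) :
    entTransportCostN C lam N P = Dfun C lam N a b u v := by
  set Z := Zfun C lam u v with hZdef
  have hZ : 0 < Z := Zfun_pos hMa hMb C lam u v
  have hsum : ∑ i, ∑ j, P i j = N := by
    rw [Finset.sum_congr rfl (fun i _ => hrow i), haN]
  have hlogPN : ∀ i j, Real.log (P i j / N)
      = -(lam * (C i j - u i - v j)) - Real.log Z := by
    intro i j
    rw [hPdef i j, show N * Real.exp (-(lam * (C i j - u i - v j))) / Z / N
        = Real.exp (-(lam * (C i j - u i - v j))) / Z from by field_simp,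
      Real.log_div (Real.exp_ne_zero _) hZ.ne', Real.log_exp]
  have hterm : ∀ i j, P i j * Real.log (P i j / N)
      = lam * (P i j * u i + P i j * v j - P i j * C i j) - P i j * Real.log Z := by
    intro i j; rw [hlogPN i j]; ring
  have hU : ∑ i, ∑ j, P i j * u i = ∑ i, a i * u i := by
    apply Finset.sum_congr rfl; intro i _
    rw [← Finset.sum_mul, hrow i, mul_comm]
  have hV : ∑ i, ∑ j, P i j * v j = ∑ j, b j * v j := by
    rw [Finset.sum_comm]
    apply Finset.sum_congr rfl; intro j _
    rw [← Finset.sum_mul, hcol j, mul_comm]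
  have hmain : ∑ i, ∑ j, P i j * Real.log (P i j / N)
      = lam * ((∑ i, a i * u i) + (∑ j, b j * v j) - (∑ i, ∑ j, P i j * C i j))
        - N * Real.log Z := by
    rw [Finset.sum_congr rfl (fun i _ => Finset.sum_congr rfl (fun j _ => hterm i j))]
    rw [← hU, ← hV, ← hsum]
    simp only [Finset.sum_sub_distrib, Finset.sum_add_distrib, ← Finset.mul_sum,
      ← Finset.sum_mul]
  rw [entTransportCostN, Dfun, hmain, ← hZdef]
  field_simp
  ring


lemma div_bound {c x K : ℝ} (hc : 0 < c) (h : (c/2) * x ≤ K) : x ≤ K * (2/c) := by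
  calc x = ((c/2)*x)*(2/c) := by field_simp
    _ ≤ K * (2/c) := mul_le_mul_of_nonneg_right h (by positivity)

/-- Dual formula for the mass-`N` normalized Sinkhorn cost (saturated case of
Corollary 1): if `a, b > 0` and `∑ a = ∑ b = N`, then
`min_{P ∈ P(a,b)} ⟨P,C⟩ + (1/λ)⟨P, log(P/N)⟩` equals the supremum over `(u,v)`
of `⟨a,u⟩ + ⟨b,v⟩ − (N/λ) log(∑_{i,j} e^{−λ(C_{ij} − u_i − v_j)})`. -/
theorem normalized_sinkhorn_duality (Ma Mb : ℕ) (hMa : 0 < Ma) (hMb : 0 < Mb)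
    (C : Matrix (Fin Ma) (Fin Mb) ℝ) (lam N : ℝ) (hlam : 0 < lam) (hN : 0 < N)
    (a : Fin Ma → ℝ) (b : Fin Mb → ℝ)
    (ha : ∀ i, 0 < a i) (hb : ∀ j, 0 < b j)
    (haN : ∑ i, a i = N) (hbN : ∑ j, b j = N) :
    sInf (entTransportCostN C lam N '' transportPolytope a b)
      = sSup {x : ℝ | ∃ (u : Fin Ma → ℝ) (v : Fin Mb → ℝ),
          x = ∑ i, a i * u i + ∑ j, b j * v j
            - (N / lam) * Real.log (∑ i, ∑ j, Real.exp (-(lam * (C i j - u i - v j))))} := by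
  have hNa : Nonempty (Fin Ma) := Fin.pos_iff_nonempty.mp hMa
  have hNb : Nonempty (Fin Mb) := Fin.pos_iff_nonempty.mp hMb
  set i₀ : Fin Ma := ⟨0, hMa⟩
  set j₀ : Fin Mb := ⟨0, hMb⟩
  set D0 : ℝ := Dfun C lam N a b (fun _ => 0) (fun _ => 0) with hD0
  choose Ku hKu using fun i0 i1 : Fin Ma =>
    D_upper hMa hMb C lam N hlam hN a b ha hb haN hbN i0 i1
  choose Kv hKv using fun j0 j1 : Fin Mb =>
    D_upper hMb hMa Cᵀ lam N hlam hN b a hb ha hbN haN j0 j1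
  -- the compact set S
  set S : Set ((Fin Ma → ℝ) × (Fin Mb → ℝ)) :=
    {p | p.1 i₀ = 0} ∩ ({p | p.2 j₀ = 0} ∩ {p | D0 ≤ Dfun C lam N a b p.1 p.2}) with hSdef
  have hS0 : (((fun _ => 0) : Fin Ma → ℝ), ((fun _ => 0) : Fin Mb → ℝ)) ∈ S := by
    refine ⟨rfl, rfl, ?_⟩
    exact le_refl D0
  have hScl : IsClosed S := by
    apply IsClosed.inter
    · exact isClosed_eq ((continuous_apply i₀).comp continuous_fst) continuous_const
    apply IsClosed.inter
    · exact isClosed_eq ((continuous_apply j₀).comp continuous_snd) continuous_const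
    · exact isClosed_le continuous_const (Dfun_continuous hMa hMb C lam N a b)
  -- the box
  set box : Set ((Fin Ma → ℝ) × (Fin Mb → ℝ)) :=
    (Set.univ.pi fun i => Set.Icc ((D0 - Ku i₀ i) * (2 / a i)) ((Ku i i₀ - D0) * (2 / a i₀)))
      ×ˢ (Set.univ.pi fun j => Set.Icc ((D0 - Kv j₀ j) * (2 / b j)) ((Kv j j₀ - D0) * (2 / b j₀)))
    with hboxdef
  have hboxcomp : IsCompact box :=
    (isCompact_univ_pi fun i => isCompact_Icc).prod (isCompact_univ_pi fun j => isCompact_Icc)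
  have hSsub : S ⊆ box := by
    rintro ⟨u, v⟩ ⟨h1, h2, h3⟩
    simp only [Set.mem_setOf_eq] at h1 h2 h3
    have hsymm : ∀ (v' : Fin Mb → ℝ) (u' : Fin Ma → ℝ),
        Dfun C lam N a b u' v' = Dfun Cᵀ lam N b a v' u' :=
      fun v' u' => Dfun_symm C lam N a b u' v'
    constructor
    · rw [Set.mem_univ_pi]
      intro i
      constructor
      · have h5 := hKu i₀ i u v
        have e : Ku i₀ i - a i / 2 * (u i₀ - u i) = Ku i₀ i - a i / 2 * (0 - u i) := by
          rw [h1]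
        rw [e] at h5
        have h4 : (a i / 2) * (- u i) ≤ Ku i₀ i - D0 := by
          have e2 : a i / 2 * (0 - u i) = a i / 2 * (-u i) := by ring
          rw [e2] at h5; linarith
        have h6 := div_bound (ha i) h4
        show (D0 - Ku i₀ i) * (2 / a i) ≤ u i
        have e3 : (D0 - Ku i₀ i) * (2 / a i) = -((Ku i₀ i - D0) * (2 / a i)) := by ring
        rw [e3]; linarith
      · have h5 := hKu i i₀ u v
        have e : Ku i i₀ - a i₀ / 2 * (u i - u i₀) = Ku i i₀ - a i₀ / 2 * (u i - 0) := by
          rw [h1]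
        rw [e] at h5
        have h4 : (a i₀ / 2) * (u i) ≤ Ku i i₀ - D0 := by
          have e2 : a i₀ / 2 * (u i - 0) = a i₀ / 2 * (u i) := by ring
          rw [e2] at h5; linarith
        exact div_bound (ha i₀) h4
    · rw [Set.mem_univ_pi]
      intro j
      constructor
      · have h5 := hKv j₀ j v u
        rw [← hsymm v u] at h5
        have e : Kv j₀ j - b j / 2 * (v j₀ - v j) = Kv j₀ j - b j / 2 * (0 - v j) := by
          rw [h2]
        rw [e] at h5
        have h4 : (b j / 2) * (- v j) ≤ Kv j₀ j - D0 := by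
          have e2 : b j / 2 * (0 - v j) = b j / 2 * (-v j) := by ring
          rw [e2] at h5; linarith
        have h6 := div_bound (hb j) h4
        show (D0 - Kv j₀ j) * (2 / b j) ≤ v j
        have e3 : (D0 - Kv j₀ j) * (2 / b j) = -((Kv j₀ j - D0) * (2 / b j)) := by ring
        rw [e3]; linarith
      · have h5 := hKv j j₀ v u
        rw [← hsymm v u] at h5
        have e : Kv j j₀ - b j₀ / 2 * (v j - v j₀) = Kv j j₀ - b j₀ / 2 * (v j - 0) := by
          rw [h2]
        rw [e] at h5
        have h4 : (b j₀ / 2) * (v j) ≤ Kv j j₀ - D0 := by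
          have e2 : b j₀ / 2 * (v j - 0) = b j₀ / 2 * (v j) := by ring
          rw [e2] at h5; linarith
        exact div_bound (hb j₀) h4
  have hScomp : IsCompact S := hboxcomp.of_isClosed_subset hScl hSsub
  -- maximize
  obtain ⟨⟨us, vs⟩, hmem, hmax⟩ := hScomp.exists_isMaxOn ⟨_, hS0⟩
    (Dfun_continuous hMa hMb C lam N a b).continuousOn
  set M : ℝ := Dfun C lam N a b us vs with hM
  have hD0M : D0 ≤ M := hmax hS0
  -- shift in v
  have shift_v : ∀ (u : Fin Ma → ℝ) (v : Fin Mb → ℝ) (t : ℝ),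
      Dfun C lam N a b u (fun j => v j + t) = Dfun C lam N a b u v := by
    intro u v t
    rw [Dfun_symm C lam N a b u (fun j => v j + t),
      Dfun_shift_u Cᵀ lam N hMb hMa hlam b a hbN v u t, ← Dfun_symm]
  -- global maximality
  have hglob : ∀ u v, Dfun C lam N a b u v ≤ M := by
    intro u v
    have h1 : Dfun C lam N a b (fun i => u i + -(u i₀)) (fun j => v j + -(v j₀))
        = Dfun C lam N a b u v := by
      rw [Dfun_shift_u C lam N hMa hMb hlam a b haN, shift_v]
    by_cases hc : D0 ≤ Dfun C lam N a b (fun i => u i + -(u i₀)) (fun j => v j + -(v j₀))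
    · have hin : ((fun i => u i + -(u i₀)), (fun j => v j + -(v j₀))) ∈ S :=
        ⟨by simp, by simp, hc⟩
      have := hmax hin
      rw [← h1]
      exact this
    · push_neg at hc
      rw [← h1]; linarith
  -- first-order conditions, rows
  set Z : ℝ := Zfun C lam us vs with hZ
  have hZpos : 0 < Z := Zfun_pos hMa hMb C lam us vs
  have hrowFO : ∀ i, a i = N * (∑ j, Real.exp (-(lam * (C i j - us i - vs j)))) / Z := by
    intro i
    have hd := hasDerivAt_row hMa hMb C lam N hlam a b us vs i
    have h0 : (fun k => us k + if k = i then (0:ℝ) else 0) = us := by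
      funext k; simp
    have hlm : IsLocalMax
        (fun t => Dfun C lam N a b (fun k => us k + if k = i then t else 0) vs) 0 := by
      apply Filter.Eventually.of_forall
      intro t
      simp only [h0]
      exact hglob _ _
    have := hlm.hasDerivAt_eq_zero hd
    rw [← hZ] at this
    linarith [this]
  -- first-order conditions, columns (via transpose)
  have hcolFO : ∀ j, b j = N * (∑ i, Real.exp (-(lam * (C i j - us i - vs j)))) / Z := by
    intro j
    have hd := hasDerivAt_row hMb hMa Cᵀ lam N hlam b a vs us j
    have h0 : (fun k => vs k + if k = j then (0:ℝ) else 0) = vs := by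
      funext k; simp
    have hlm : IsLocalMax
        (fun t => Dfun Cᵀ lam N b a (fun k => vs k + if k = j then t else 0) us) 0 := by
      apply Filter.Eventually.of_forall
      intro t
      simp only [h0]
      rw [← Dfun_symm, ← Dfun_symm]
      exact hglob _ _
    have h1 := hlm.hasDerivAt_eq_zero hd
    have h2 : Zfun Cᵀ lam vs us = Z := by rw [hZ, Zfun_symm C lam us vs]
    have h3 : ∀ i, Cᵀ j i - vs j - us i = C i j - us i - vs j := by
      intro i; rw [Matrix.transpose_apply]; ring
    have h4 : (∑ i, Real.exp (-(lam * (Cᵀ j i - vs j - us i))))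
        = ∑ i, Real.exp (-(lam * (C i j - us i - vs j))) := by
      apply Finset.sum_congr rfl; intro i _; rw [h3]
    rw [h2, h4] at h1
    linarith [h1]
  -- the optimal plan
  set Pstar : Matrix (Fin Ma) (Fin Mb) ℝ :=
    fun i j => N * Real.exp (-(lam * (C i j - us i - vs j))) / Z with hPdef
  have hProw : ∀ i, ∑ j, Pstar i j = a i := by
    intro i
    rw [hrowFO i]
    simp only [hPdef]
    rw [← Finset.sum_div, ← Finset.mul_sum]
  have hPcol : ∀ j, ∑ i, Pstar i j = b j := by
    intro j
    rw [hcolFO j]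
    simp only [hPdef]
    rw [← Finset.sum_div, ← Finset.mul_sum]
  have hPnn : ∀ i j, 0 ≤ Pstar i j := fun i j =>
    le_of_lt (div_pos (mul_pos hN (Real.exp_pos _)) hZpos)
  have hPmem : Pstar ∈ transportPolytope a b := ⟨hPnn, hProw, hPcol⟩
  have hcost : entTransportCostN C lam N Pstar = M := by
    rw [hM]
    exact cost_eq_dual hMa hMb C lam N hlam hN a b haN us vs Pstar
      (fun i j => by rw [hPdef, ← hZ]) hProw hPcol
  -- conclusion
  have h_in : M ∈ entTransportCostN C lam N '' transportPolytope a b :=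
    ⟨Pstar, hPmem, hcost⟩
  have h_lb : ∀ x ∈ entTransportCostN C lam N '' transportPolytope a b, M ≤ x := by
    rintro x ⟨P, hP, rfl⟩
    exact weak_duality hMa hMb C lam N hlam hN a b haN P hP us vs
  have hinf : sInf (entTransportCostN C lam N '' transportPolytope a b) = M :=
    le_antisymm (csInf_le ⟨M, h_lb⟩ h_in) (le_csInf ⟨M, h_in⟩ h_lb)
  have hmemT : M ∈ {x : ℝ | ∃ (u : Fin Ma → ℝ) (v : Fin Mb → ℝ),
      x = ∑ i, a i * u i + ∑ j, b j * v j
        - (N / lam) * Real.log (∑ i, ∑ j, Real.exp (-(lam * (C i j - u i - v j))))} :=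
    ⟨us, vs, rfl⟩
  have h_ub : ∀ x ∈ {x : ℝ | ∃ (u : Fin Ma → ℝ) (v : Fin Mb → ℝ),
      x = ∑ i, a i * u i + ∑ j, b j * v j
        - (N / lam) * Real.log (∑ i, ∑ j, Real.exp (-(lam * (C i j - u i - v j))))},
      x ≤ M := by
    rintro x ⟨u, v, rfl⟩
    exact hglob u v
  have hsup : sSup {x : ℝ | ∃ (u : Fin Ma → ℝ) (v : Fin Mb → ℝ),
      x = ∑ i, a i * u i + ∑ j, b j * v j
        - (N / lam) * Real.log (∑ i, ∑ j, Real.exp (-(lam * (C i j - u i - v j))))} = M :=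
    le_antisymm (csSup_le ⟨M, hmemT⟩ h_ub) (le_csSup ⟨M, h_ub⟩ hmemT)
  rw [hinf, hsup]
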